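/- Let S^{αβ} be the spinor generators (S^{αβ})^A_B = (1/2)(Σ_Ẋ σ^{α AẊ} σ^β_{BẊ} − Σ_Ẋ σ^{β AẊ} σ^α_{BẊ}) and S̄^{αβ} their entrywise complex conjugates, with S_{αβ} = η_{αγ}η_{βδ} S^{γδ}. Then on ℂ² ⊗ ℂ²: (i) Σ_{α,β=0}^{3} S^{αβ} ⊗ S_{αβ} = 4 P_ε − 1, where P_ε is the operator with components (P_ε)^{AB}_{CD} = (1/2) ε^{AB} ε_{CD} (ε the antisymmetric 2×2 matrix with ε_{12} = 1, and ε^{AB} = ε_{AB}), and (ii) Σ_{α,β=0}^{3} S^{αβ} ⊗ S̄_{αβ} = 0. -/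

import Mathlib

open Kronecker

noncomputable section

/-- The Minkowski metric `η = diag(1,-1,-1,-1)` (complex-valued components). -/
def etaC : Fin 4 → Fin 4 → ℂ := fun μ ν => if μ = ν then (if μ = 0 then 1 else -1) else 0

/-- `σ₀` the 2×2 identity, `σ₁, σ₂, σ₃` the Pauli matrices. -/
def sigma : Fin 4 → Matrix (Fin 2) (Fin 2) ℂ :=
  ![1, !![0, 1; 1, 0], !![0, -Complex.I; Complex.I, 0], !![1, 0; 0, -1]]

/-- `σ̃_μ = σ^μ = η^{μν} σ_ν`. -/
def sigmaTilde (μ : Fin 4) : Matrix (Fin 2) (Fin 2) ℂ := ∑ ν : Fin 4, etaC μ ν • sigma ν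

/-- Van der Waerden symbol with upper spinor indices: `σ_μ^{AẊ} = (1/√2)(σ_μ)_{AX}`. -/
def vdwUp (μ : Fin 4) (A X : Fin 2) : ℂ := ((Real.sqrt 2 : ℝ) : ℂ)⁻¹ * sigma μ A X

/-- Van der Waerden symbol with lower spinor indices: `σ_{μ AẊ} = (1/√2)(σ̃_μ^T)_{AX}`. -/
def vdwDown (μ : Fin 4) (A X : Fin 2) : ℂ :=
  ((Real.sqrt 2 : ℝ) : ℂ)⁻¹ * (sigmaTilde μ).transpose A X

/-- `σ^{α AẊ} = η^{αμ} σ_μ^{AẊ}`. -/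
def vdwUpU (α : Fin 4) (A X : Fin 2) : ℂ := ∑ μ : Fin 4, etaC α μ * vdwUp μ A X

/-- `σ^α_{BẊ} = η^{αμ} σ_{μ BẊ}`. -/
def vdwDownU (α : Fin 4) (B X : Fin 2) : ℂ := ∑ μ : Fin 4, etaC α μ * vdwDown μ B X

/-- The spinor representation generators
`(S^{αβ})^A_B = (1/2)(Σ_Ẋ σ^{α AẊ} σ^β_{BẊ} − Σ_Ẋ σ^{β AẊ} σ^α_{BẊ})`. -/
def Sgen (α β : Fin 4) : Matrix (Fin 2) (Fin 2) ℂ :=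
  Matrix.of fun A B =>
    (1 / 2 : ℂ) * ((∑ X : Fin 2, vdwUpU α A X * vdwDownU β B X) -
      (∑ X : Fin 2, vdwUpU β A X * vdwDownU α B X))

/-- The generators with lowered indices, `S_{αβ} = η_{αγ} η_{βδ} S^{γδ}`. -/
def SgenLow (α β : Fin 4) : Matrix (Fin 2) (Fin 2) ℂ :=
  ∑ γ : Fin 4, ∑ δ : Fin 4, (etaC α γ * etaC β δ) • Sgen γ δ

/-- The antisymmetric spinor metric `ε` with `ε₁₂ = 1` (indices raised with `ε^{AB} = ε_{AB}`). -/
def eps : Fin 2 → Fin 2 → ℂ := fun A B => (!![0, 1; -1, 0] : Matrix (Fin 2) (Fin 2) ℂ) A B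

/-- The projector `(P_ε)^{AB}_{CD} = (1/2) ε^{AB} ε_{CD}` on `ℂ² ⊗ ℂ²`. -/
def Peps : Matrix (Fin 2 × Fin 2) (Fin 2 × Fin 2) ℂ :=
  Matrix.of fun p q => (1 / 2 : ℂ) * eps p.1 p.2 * eps q.1 q.2

lemma sqrt2_inv_mul :
    ((Real.sqrt 2 : ℝ) : ℂ)⁻¹ * ((Real.sqrt 2 : ℝ) : ℂ)⁻¹ = 1 / 2 := by
  rw [← Complex.ofReal_inv, ← Complex.ofReal_mul, ← mul_inv,
    Real.mul_self_sqrt (by norm_num : (0:ℝ) ≤ 2)]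
  norm_num

lemma vdwUpU_eq (α : Fin 4) (A X : Fin 2) :
    vdwUpU α A X = etaC α α * vdwUp α A X := by
  fin_cases α <;> simp [vdwUpU, etaC, Fin.sum_univ_four]

lemma vdwDownU_eq (α : Fin 4) (B X : Fin 2) :
    vdwDownU α B X = ((Real.sqrt 2 : ℝ) : ℂ)⁻¹ * sigma α X B := by
  fin_cases α <;>
    simp [vdwDownU, vdwDown, sigmaTilde, etaC, Fin.sum_univ_four, Matrix.transpose_apply,
      Matrix.sum_apply, Matrix.smul_apply]

lemma Sgen_apply (α β : Fin 4) (A B : Fin 2) :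
    Sgen α β A B = (1/4 : ℂ) * (etaC α α * (sigma α * sigma β) A B
      - etaC β β * (sigma β * sigma α) A B) := by
  simp only [Sgen, Matrix.of_apply, vdwUpU_eq, vdwDownU_eq, vdwUp, Matrix.mul_apply,
    Fin.sum_univ_two]
  linear_combination ((1/2 : ℂ) * (etaC α α * (sigma α A 0 * sigma β 0 B
      + sigma α A 1 * sigma β 1 B)
    - etaC β β * (sigma β A 0 * sigma α 0 B + sigma β A 1 * sigma α 1 B))) * sqrt2_inv_mul

lemma SgenLow_apply (α β : Fin 4) (A B : Fin 2) :
    SgenLow α β A B = etaC α α * etaC β β * Sgen α β A B := by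
  fin_cases α <;> fin_cases β <;>
    simp [SgenLow, etaC, Fin.sum_univ_four, Matrix.sum_apply, Matrix.smul_apply]

set_option maxHeartbeats 2000000 in
/-- On `ℂ² ⊗ ℂ²`: `Σ_{αβ} S^{αβ} ⊗ S_{αβ} = 4 P_ε − 1` and `Σ_{αβ} S^{αβ} ⊗ S̄_{αβ} = 0`. -/
theorem spinor_tensor_casimir :
    (∑ α : Fin 4, ∑ β : Fin 4, Sgen α β ⊗ₖ SgenLow α β =
      (4 : ℂ) • Peps - (1 : Matrix (Fin 2 × Fin 2) (Fin 2 × Fin 2) ℂ)) ∧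
    (∑ α : Fin 4, ∑ β : Fin 4, Sgen α β ⊗ₖ (SgenLow α β).map (starRingEnd ℂ) = 0) := by
  constructor <;>
  · ext ⟨A, C⟩ ⟨B, D⟩
    simp only [Matrix.sum_apply, Matrix.add_apply, Matrix.kroneckerMap_apply, Matrix.map_apply, Matrix.sub_apply,
      Matrix.smul_apply, Matrix.one_apply, Peps, Matrix.of_apply, Matrix.zero_apply,
      Fin.sum_univ_four, Sgen_apply, SgenLow_apply, Matrix.mul_apply, Fin.sum_univ_two]
    fin_cases A <;> fin_cases B <;> fin_cases C <;> fin_cases D <;>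
      norm_num [etaC, sigma, eps, Complex.ext_iff, Fin.ext_iff, smul_eq_mul,
          Matrix.cons_val_two, Matrix.cons_val_three, Matrix.vecHead, Matrix.vecTail,
        (by decide : ((1:Fin 4) = 0) = False), (by decide : ((2:Fin 4) = 0) = False),
        (by decide : ((3:Fin 4) = 0) = False)] <;> decide
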